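/- For integers d ≥ 1 and 1 ≤ k ≤ d, Σ_{r=0}^{d−k} C(d−k, r) / C(d−1, r−1+k) = d/k, where C(n,m) denotes the binomial coefficient. -/

import Mathlib

open Finset

/-- The combinatorial identity `∑_{r=0}^{d-k} C(d-k, r) / C(d-1, r+k-1) = d/k`
for `1 ≤ k ≤ d`, used to simplify the Shapley value of the
maximum-of-exponentials game. -/
theorem sum_choose_div_choose (d k : ℕ) (hk : 1 ≤ k) (hkd : k ≤ d) :
    ∑ r ∈ Finset.range (d - k + 1),
        (Nat.choose (d - k) r : ℝ) / (Nat.choose (d - 1) (r + k - 1) : ℝ)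
      = (d : ℝ) / (k : ℝ) := by
  obtain ⟨m, rfl⟩ : ∃ m, k = m + 1 := ⟨k - 1, (Nat.succ_pred_eq_of_pos hk).symm⟩
  obtain ⟨n, rfl⟩ : ∃ n, d = m + 1 + n := ⟨d - (m + 1), (Nat.add_sub_cancel' hkd).symm⟩
  have hdk : m + 1 + n - (m + 1) = n := by omega
  have hd1 : m + 1 + n - 1 = m + n := by omega
  rw [hdk, hd1]
  have key : ∀ r ∈ Finset.range (n + 1),
      (Nat.choose n r : ℝ) / (Nat.choose (m + n) (r + (m + 1) - 1) : ℝ)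
        = (Nat.choose (r + m) m : ℝ) / (Nat.choose (m + n) m : ℝ) := by
    intro r hr
    have hr' : r ≤ n := Nat.lt_succ_iff.mp (mem_range.mp hr)
    have hrk : r + (m + 1) - 1 = r + m := by omega
    rw [hrk]
    have h1 : Nat.choose (m + n) (r + m) * Nat.choose (r + m) m
        = Nat.choose (m + n) m * Nat.choose n r := by
      have := Nat.choose_mul (n := m + n) (k := r + m) (s := m) (by omega)
      simpa [Nat.add_sub_cancel, show m + n - m = n by omega,
        show r + m - m = r by omega] using this
    have hne1 : (Nat.choose (m + n) (r + m) : ℝ) ≠ 0 := by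
      exact_mod_cast (Nat.choose_pos (show r + m ≤ m + n by omega)).ne'
    have hne2 : (Nat.choose (m + n) m : ℝ) ≠ 0 := by
      exact_mod_cast (Nat.choose_pos (show m ≤ m + n by omega)).ne'
    field_simp
    have := congrArg (Nat.cast : ℕ → ℝ) h1
    push_cast at this
    linarith [this]
  rw [Finset.sum_congr rfl key, ← Finset.sum_div]
  have hsum : ∑ r ∈ Finset.range (n + 1), (Nat.choose (r + m) m : ℝ)
      = (Nat.choose (m + n + 1) (m + 1) : ℝ) := by
    have := Nat.sum_Icc_choose (m + n) m
    have heq : ∑ r ∈ Finset.range (n + 1), Nat.choose (r + m) m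
        = ∑ i ∈ Finset.Icc m (m + n), Nat.choose i m := by
      rw [← Finset.Ico_add_one_right_eq_Icc, Finset.sum_Ico_eq_sum_range]
      apply Finset.sum_congr (by congr 1; omega)
      intro x _; congr 1; omega
    exact_mod_cast heq.trans this
  rw [hsum]
  have hk1 : (m + 1 : ℝ) ≠ 0 := by positivity
  have hne2 : (Nat.choose (m + n) m : ℝ) ≠ 0 := by
    exact_mod_cast (Nat.choose_pos (show m ≤ m + n by omega)).ne'
  rw [div_eq_div_iff hne2 (by positivity)]
  have := Nat.add_one_mul_choose_eq (m + n) m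
  have := congrArg (Nat.cast : ℕ → ℝ) this
  push_cast at this ⊢
  linarith [this]
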